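/- arXiv:math/0406373 — 2 statements merged into one kernel-verified Lean document; each statement's English description precedes it below -/
import Mathlib

section
/- Let A be a commutative ring, d ≥ 1, and η₀, ..., η_d ∈ A with η₀² = 2η₀. Suppose ∏_{i=1}^{d}(η₀ + η_i - η₀η_i) = 0 and (2-η₀)·∏_{i=1}^d η_i = 0. Then ∑_{S ⊆ {1,...,d}} (-η₀)^{d-|S|} · ∏_{i∈S} η_i = 0. -/
theorem stmt6 {A : Type*} [CommRing A] (d : ℕ) (hd : 1 ≤ d) (η₀ : A) (η : Fin d → A)
    (h₀ : η₀ ^ 2 = 2 * η₀)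
    (hprod : ∏ i : Fin d, (η₀ + η i - η₀ * η i) = 0)
    (hfour : (2 - η₀) * ∏ i : Fin d, η i = 0) :
    ∑ S ∈ (Finset.univ : Finset (Fin d)).powerset,
      (-η₀) ^ (d - S.card) * ∏ i ∈ S, η i = 0 := by
  classical
  -- absorption lemma
  have habs : ∀ k m : ℕ, 1 ≤ m → (1 - η₀) ^ k * η₀ ^ m = (-1 : A) ^ k * η₀ ^ m := by
    intro k m hm
    obtain ⟨m', rfl⟩ := Nat.exists_eq_add_of_le hm
    induction k with
    | zero => simp
    | succ k ih =>
      have h1 : (1 - η₀) * η₀ = -η₀ := by linear_combination -h₀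
      calc (1 - η₀) ^ (k + 1) * η₀ ^ (1 + m')
          = (1 - η₀) ^ k * (((1 - η₀) * η₀) * η₀ ^ m') := by ring
        _ = (1 - η₀) ^ k * ((-1) * (η₀ * η₀ ^ m')) := by rw [h1]; ring
        _ = (-1) * ((1 - η₀) ^ k * η₀ ^ (1 + m')) := by ring
        _ = (-1) * ((-1 : A) ^ k * η₀ ^ (1 + m')) := by rw [ih]
        _ = (-1 : A) ^ (k + 1) * η₀ ^ (1 + m') := by ring
  -- product expansion
  have hT : ∑ S ∈ (Finset.univ : Finset (Fin d)).powerset,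
      (1 - η₀) ^ S.card * η₀ ^ (d - S.card) * ∏ i ∈ S, η i = 0 := by
    have e1 : ∏ i : Fin d, (η i * (1 - η₀) + η₀) = 0 := by
      rw [← hprod]; exact Finset.prod_congr rfl fun i _ => by ring
    rw [Finset.prod_add] at e1
    rw [← e1]
    apply Finset.sum_congr rfl
    intro S hS
    rw [Finset.prod_mul_distrib, Finset.prod_const, Finset.prod_const,
      Finset.card_sdiff_of_subset (Finset.mem_powerset.mp hS), Finset.card_univ, Fintype.card_fin]
    ring
  set F : Finset (Fin d) → A := fun S => (-η₀) ^ (d - S.card) * ∏ i ∈ S, η i with hF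
  set G : Finset (Fin d) → A := fun S =>
    (-1 : A) ^ d * ((1 - η₀) ^ S.card * η₀ ^ (d - S.card) * ∏ i ∈ S, η i) with hG
  have hGsum : ∑ S ∈ (Finset.univ : Finset (Fin d)).powerset, G S = 0 := by
    rw [hG, ← Finset.mul_sum, hT, mul_zero]
  have huniv : (Finset.univ : Finset (Fin d)) ∈ (Finset.univ : Finset (Fin d)).powerset := by
    simp
  have hFG : ∀ S ∈ ((Finset.univ : Finset (Fin d)).powerset).erase Finset.univ, F S = G S := by
    intro S hS
    obtain ⟨hne, hmem⟩ := Finset.mem_erase.mp hS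
    have hlt : S.card < d := by
      have := Finset.card_lt_card (lt_of_le_of_ne (Finset.mem_powerset.mp hmem)
        (by exact fun h => hne (by simpa using h)))
      simpa using this
    have h1 : 1 ≤ d - S.card := by omega
    rw [hF, hG]
    simp only
    rw [habs _ _ h1]
    have : (-η₀ : A) ^ (d - S.card) = (-1 : A) ^ (d - S.card) * η₀ ^ (d - S.card) := by
      rw [neg_pow]
    rw [this]
    have : ((-1 : A) ^ d * (-1 : A) ^ S.card) = (-1 : A) ^ (d - S.card) := by
      rw [← pow_add]
      have : d + S.card = (d - S.card) + 2 * S.card := by omega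
      rw [this, pow_add, pow_mul]
      simp
    linear_combination (η₀ ^ (d - S.card) * ∏ i ∈ S, η i) * this.symm
  have split1 := Finset.add_sum_erase _ F huniv
  have split2 := Finset.add_sum_erase _ G huniv
  rw [Finset.sum_congr rfl hFG] at split1
  have : ∑ S ∈ (Finset.univ : Finset (Fin d)).powerset, F S
      = F Finset.univ - G Finset.univ := by
    rw [← split1]
    have : ∑ S ∈ ((Finset.univ : Finset (Fin d)).powerset).erase Finset.univ, G S
        = -G Finset.univ := by
      have := split2
      rw [hGsum] at this
      linear_combination this
    rw [this]; ring
  rw [this, hF, hG]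
  simp only [Finset.card_univ, Fintype.card_fin, Nat.sub_self, pow_zero, one_mul]
  have hpar : (-1 : A) ^ d * (1 - η₀) ^ d = (η₀ - 1) ^ d := by
    rw [← mul_pow]; ring_nf
  have h2 : (η₀ - 1) ^ 2 = 1 := by linear_combination h₀
  rcases Nat.even_or_odd d with ⟨k, hk⟩ | ⟨k, hk⟩
  · have heven : (η₀ - 1) ^ d = 1 := by
      rw [hk, ← two_mul, pow_mul, h2, one_pow]
    linear_combination (-(∏ i : Fin d, η i)) * hpar - (∏ i : Fin d, η i) * heven
  · have hodd : (η₀ - 1) ^ d = η₀ - 1 := by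
      rw [hk, pow_add, pow_mul, h2, one_pow, pow_one, one_mul]
    linear_combination (-(∏ i : Fin d, η i)) * hpar - (∏ i : Fin d, η i) * hodd + hfour
end

section
/- Let A and B be commutative rings, f : A → B a ring homomorphism, t : B → A an A-module map satisfying the projection formula, and suppose t(1) = 2 - x for some x ∈ A with x(2-x) = 0 and 2 invertible in A. Then every element α of the kernel of f satisfies α = (1/2)·x·α; in particular ker f ⊆ (x). -/
theorem stmt8 {A B : Type*} [CommRing A] [CommRing B] [Algebra A B]
    [Invertible (2 : A)] (t : B →ₗ[A] A) (x : A)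
    (hx : x * (2 - x) = 0) (ht : t 1 = 2 - x)
    (α : A) (hα : algebraMap A B α = 0) :
    α = ⅟(2 : A) * (x * α) ∧ α ∈ Ideal.span ({x} : Set A) := by
  have key : α * (2 - x) = 0 := by
    have : t (algebraMap A B α) = α * (2 - x) := by
      have e : algebraMap A B α = α • (1 : B) := by rw [Algebra.smul_def, mul_one]
      rw [e, map_smul, ht, smul_eq_mul]
    rw [hα, map_zero] at this
    exact this.symm
  have h2 : 2 * α = x * α := by ring_nf; ring_nf at key; linear_combination key
  have h1 : α = ⅟(2 : A) * (x * α) := by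
    rw [← h2, ← mul_assoc, invOf_mul_self, one_mul]
  refine ⟨h1, ?_⟩
  rw [Ideal.mem_span_singleton]
  exact ⟨⅟(2:A) * α, by rw [mul_comm x, mul_assoc]; nth_rewrite 1 [h1]; ring⟩
end
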